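/- Let d ≥ 1 and Λ > 0, and let A be a symmetric d×d real matrix all of whose entries are bounded by Λ in absolute value. Let φ : ℝᵈ → ℝ be four times continuously differentiable with all fourth-order partial derivatives bounded in absolute value by M₄ on ℝᵈ. Then there is a constant C depending only on d such that |L_h^A φ(x) − Tr(A D²φ(x))| ≤ C Λ M₄ h² for every x ∈ ℝᵈ and every h > 0; in particular, L_h^A φ(x) → Tr(A D²φ(x)) as h → 0⁺. -/

import Mathlib

open scoped BigOperators
open MeasureTheory
open scoped Classical

noncomputable section

namespace Paper

/-- `ℝᵈ` with the Euclidean structure. -/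
abbrev E (d : ℕ) := EuclideanSpace ℝ (Fin d)

/-- The standard basis vector `eᵢ` of `ℝᵈ`. -/
def e (d : ℕ) (i : Fin d) : E d := EuclideanSpace.single i 1

/-- For a symmetric matrix, the maximum of the absolute values of its eigenvalues. -/
def specNorm {d : ℕ} (M : Matrix (Fin d) (Fin d) ℝ) : ℝ :=
  if h : M.IsHermitian then ⨆ i, |h.eigenvalues i| else 0

/-- `(λ,Λ)`-uniform ellipticity of `F : S(d) → ℝ`. -/
def UniformlyElliptic (d : ℕ) (lam Lam : ℝ) (F : Matrix (Fin d) (Fin d) ℝ → ℝ) : Prop :=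
  ∀ M N : Matrix (Fin d) (Fin d) ℝ, M.IsHermitian → N.PosSemidef →
    lam * specNorm N ≤ F M - F (M + N) ∧ F M - F (M + N) ≤ Lam * specNorm N

/-- The upwind discretisation `|D_h u (x)|²`. -/
def upwindSq (d : ℕ) (h : ℝ) (u : E d → ℝ) (x : E d) : ℝ :=
  (1 / h ^ 2) * ∑ i : Fin d,
    max (max (u x - u (x + h • e d i)) (u x - u (x - h • e d i))) 0 ^ 2

/-- The monotone discretisation `L_h^A u (x)` of `Tr (A D²u)`. -/
def Lh (d : ℕ) (h : ℝ) (A : Matrix (Fin d) (Fin d) ℝ) (u : E d → ℝ) (x : E d) : ℝ :=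
  (∑ i : Fin d, (A i i - ∑ j ∈ Finset.univ.erase i, |A i j|) *
      ((u (x + h • e d i) + u (x - h • e d i) - 2 * u x) / h ^ 2)) +
  ∑ i : Fin d, ∑ j ∈ Finset.univ.filter (fun j => i < j),
    (max (A i j) 0 *
        ((u (x + h • (e d i + e d j)) + u (x - h • (e d i + e d j)) - 2 * u x) / h ^ 2) +
      max (-A i j) 0 *
        ((u (x + h • (e d i - e d j)) + u (x - h • (e d i - e d j)) - 2 * u x) / h ^ 2))

/-- Diagonal dominance of a matrix. -/
def DiagDominant {d : ℕ} (A : Matrix (Fin d) (Fin d) ℝ) : Prop :=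
  ∀ i, ∑ j ∈ Finset.univ.erase i, |A i j| ≤ A i i

/-- Isaacs data with ellipticity constants `(λ, Λ)`: symmetric, diagonally dominant matrices
with `λ I ≤ A_{α,β} ≤ Λ I`. -/
def IsaacsData (d : ℕ) {ιA ιB : Type*} (lam Lam : ℝ)
    (A : ιA → ιB → Matrix (Fin d) (Fin d) ℝ) : Prop :=
  ∀ a b, (A a b).IsHermitian ∧ DiagDominant (A a b) ∧
    (A a b - lam • (1 : Matrix (Fin d) (Fin d) ℝ)).PosSemidef ∧
    (Lam • (1 : Matrix (Fin d) (Fin d) ℝ) - A a b).PosSemidef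

/-- Discretised Isaacs operator. -/
def Fh (d : ℕ) {ιA ιB : Type*} (h : ℝ) (A : ιA → ιB → Matrix (Fin d) (Fin d) ℝ)
    (u : E d → ℝ) (x : E d) : ℝ :=
  ⨆ a : ιA, ⨅ b : ιB, -(Lh d h (A a b) u x)

/-- A finite grid `Ω̄_h = Ω_h ∪ ∂Ω_h` whose interior points have all stencil points in the grid. -/
structure Grid (d : ℕ) (h : ℝ) where
  interior : Finset (E d)
  boundary : Finset (E d)
  disj : Disjoint interior boundary
  nonempty : (interior ∪ boundary).Nonempty
  stencil_ax : ∀ x ∈ interior, ∀ i : Fin d,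
    x + h • e d i ∈ interior ∪ boundary ∧ x - h • e d i ∈ interior ∪ boundary
  stencil_diag : ∀ x ∈ interior, ∀ i j : Fin d, i < j →
    x + h • (e d i + e d j) ∈ interior ∪ boundary ∧
    x - h • (e d i + e d j) ∈ interior ∪ boundary ∧
    x + h • (e d i - e d j) ∈ interior ∪ boundary ∧
    x - h • (e d i - e d j) ∈ interior ∪ boundary

/-- The finite difference scheme `G_h` for the regularised pure degenerate equation. -/
def scheme (d : ℕ) {ιA ιB : Type*} {h : ℝ} (ε θ : ℝ)
    (A : ιA → ιB → Matrix (Fin d) (Fin d) ℝ) (G : Grid d h)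
    (f g : E d → ℝ) (u : E d → ℝ) (x : E d) : ℝ :=
  if x ∈ G.interior then
    ε * u x + Fh d h A u x - f x / (ε + upwindSq d h u x) ^ (θ / 2)
  else u x - g x

/-- The finite difference scheme `G_h` for the regularised free transmission problem. -/
def schemeT (d : ℕ) {ιA ιB : Type*} {h : ℝ} (ε : ℝ) (θe : ℝ → ℝ)
    (A : ιA → ιB → Matrix (Fin d) (Fin d) ℝ) (G : Grid d h)
    (f g : E d → ℝ) (u : E d → ℝ) (x : E d) : ℝ :=
  if x ∈ G.interior then
    ε * u x + Fh d h A u x - f x / (ε + upwindSq d h u x) ^ (θe (u x) / 2)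
  else u x - g x

/-- The properties of the regularised degeneracy exponent `θ_ε` used in the transmission scheme. -/
def ThetaInterp (ε θ₁ θ₂ : ℝ) (θe : ℝ → ℝ) : Prop :=
  Monotone θe ∧ (∀ t, θ₁ ≤ θe t ∧ θe t ≤ θ₂) ∧
    (∀ t, t ≤ -ε → θe t = θ₁) ∧ (∀ t, ε ≤ t → θe t = θ₂)

/-- The Hessian matrix of `φ : ℝᵈ → ℝ` at `x`. -/
def hessianMatrix (d : ℕ) (φ : E d → ℝ) (x : E d) : Matrix (Fin d) (Fin d) ℝ :=
  Matrix.of fun i j => fderiv ℝ (fun y => fderiv ℝ φ y (e d j)) x (e d i)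

/-- The piecewise-linear interpolation `Θ_ε` between the degeneracy rates `θ₁` and `θ₂`. -/
def ThetaStep (θ₁ θ₂ ε t : ℝ) : ℝ :=
  if t ≤ -ε then θ₁
  else if t < ε then (θ₂ - θ₁) / (2 * ε) * t + (θ₁ + θ₂) / 2
  else θ₂

/-- within = global for iterated derivatives of globally smooth functions. -/
lemma aux_withinEq {f : ℝ → ℝ} {s : Set ℝ} (hs : UniqueDiffOn ℝ s)
    (hf : ContDiff ℝ 4 f) : ∀ n, n ≤ 4 → ∀ x ∈ s,
      iteratedDerivWithin n f s x = iteratedDeriv n f x := by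
  intro n
  induction n with
  | zero => intro _ x _; simp
  | succ n IH =>
    intro hn x hx
    rw [iteratedDerivWithin_succ, iteratedDeriv_succ]
    have h1 : Set.EqOn (iteratedDerivWithin n f s) (iteratedDeriv n f) s :=
      fun y hy => IH (by omega) y hy
    rw [derivWithin_congr h1 (h1 hx)]
    have hdiff : DifferentiableAt ℝ (iteratedDeriv n f) x := by
      have := hf.differentiable_iteratedDeriv n (by exact_mod_cast (by omega : n < 4))
      exact this.differentiableAt
    exact hdiff.derivWithin (hs.uniqueDiffWithinAt hx)

/-- Iterated derivative along a line. -/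
lemma aux_line {d : ℕ} {φ : E d → ℝ} (hφ : ContDiff ℝ 4 φ) (x v : E d) :
    ∀ n, n ≤ 4 → ∀ t : ℝ,
      iteratedDeriv n (fun s : ℝ => φ (x + s • v)) t
        = iteratedFDeriv ℝ n φ (x + t • v) (fun _ => v) := by
  intro n
  induction n with
  | zero => intro _ t; simp
  | succ n IH =>
    intro hn t
    have hfun : iteratedDeriv n (fun s : ℝ => φ (x + s • v))
        = fun s : ℝ => iteratedFDeriv ℝ n φ (x + s • v) (fun _ => v) :=
      funext fun s => IH (by omega) s
    rw [iteratedDeriv_succ, hfun]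
    have hdiff : DifferentiableAt ℝ (iteratedFDeriv ℝ n φ) (x + t • v) :=
      (hφ.differentiable_iteratedFDeriv (by exact_mod_cast (by omega : n < 4))).differentiableAt
    have hline : HasDerivAt (fun s : ℝ => x + s • v) v t := by
      simpa using ((hasDerivAt_id t).smul_const v).const_add x
    have h1 : HasDerivAt (fun s : ℝ => iteratedFDeriv ℝ n φ (x + s • v))
        (fderiv ℝ (iteratedFDeriv ℝ n φ) (x + t • v) v) t :=
      hdiff.hasFDerivAt.comp_hasDerivAt t hline
    have h2 := ((ContinuousMultilinearMap.apply ℝ (fun _ : Fin n => E d) ℝ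
        (fun _ => v)).hasFDerivAt).comp_hasDerivAt t h1
    have h3 : HasDerivAt (fun s : ℝ => iteratedFDeriv ℝ n φ (x + s • v) (fun _ => v))
        ((fderiv ℝ (iteratedFDeriv ℝ n φ) (x + t • v) v) (fun _ => v)) t := h2
    rw [h3.deriv, iteratedFDeriv_succ_apply_left]
    rfl


/-- One-sided third order Taylor bound along a line. -/
lemma aux_taylor {d : ℕ} {φ : E d → ℝ} (hφ : ContDiff ℝ 4 φ) {M₄ : ℝ}
    (hM : ∀ y, ‖iteratedFDeriv ℝ 4 φ y‖ ≤ M₄) (x w : E d) {h : ℝ} (hh : 0 < h) :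
    |φ (x + h • w) - (φ x + h * iteratedFDeriv ℝ 1 φ x (fun _ => w)
        + h ^ 2 / 2 * iteratedFDeriv ℝ 2 φ x (fun _ => w)
        + h ^ 3 / 6 * iteratedFDeriv ℝ 3 φ x (fun _ => w))|
      ≤ M₄ * ‖w‖ ^ 4 * h ^ 4 / 6 := by
  set g : ℝ → ℝ := fun s : ℝ => φ (x + s • w) with hg_def
  have hg : ContDiff ℝ 4 g :=
    hφ.comp (contDiff_const.add (contDiff_id.smul contDiff_const))
  have hu : UniqueDiffOn ℝ (Set.Icc 0 h) := uniqueDiffOn_Icc hh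
  have hC : ∀ y ∈ Set.Icc (0:ℝ) h,
      ‖iteratedDerivWithin 4 g (Set.Icc 0 h) y‖ ≤ M₄ * ‖w‖ ^ 4 := by
    intro y hy
    rw [aux_withinEq hu hg 4 le_rfl y hy, aux_line hφ x w 4 le_rfl y]
    calc ‖iteratedFDeriv ℝ 4 φ (x + y • w) (fun _ => w)‖
        ≤ ‖iteratedFDeriv ℝ 4 φ (x + y • w)‖ * ∏ _i : Fin 4, ‖w‖ :=
          (iteratedFDeriv ℝ 4 φ (x + y • w)).le_opNorm _
      _ ≤ M₄ * ‖w‖ ^ 4 := by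
          rw [Finset.prod_const, Finset.card_univ, Fintype.card_fin]
          exact mul_le_mul_of_nonneg_right (hM _) (by positivity)
  have key := taylor_mean_remainder_bound (n := 3) hh.le
    (hg.contDiffOn.of_le (by norm_num)) (Set.right_mem_Icc.2 hh.le) hC
  have hD : ∀ k, k ≤ 4 → iteratedDerivWithin k g (Set.Icc 0 h) 0
      = iteratedFDeriv ℝ k φ x (fun _ => w) := by
    intro k hk
    rw [aux_withinEq hu hg k hk 0 (Set.left_mem_Icc.2 hh.le), aux_line hφ x w k hk 0]
    norm_num
  have hT : taylorWithinEval g 3 (Set.Icc 0 h) 0 h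
      = φ x + h * iteratedFDeriv ℝ 1 φ x (fun _ => w)
        + h ^ 2 / 2 * iteratedFDeriv ℝ 2 φ x (fun _ => w)
        + h ^ 3 / 6 * iteratedFDeriv ℝ 3 φ x (fun _ => w) := by
    rw [show (3:ℕ) = 2 + 1 from rfl, taylorWithinEval_succ,
        show (2:ℕ) = 1 + 1 from rfl, taylorWithinEval_succ,
        show taylorWithinEval g 1 (Set.Icc 0 h) 0 h = taylorWithinEval g (0 + 1) (Set.Icc 0 h) 0 h from rfl,
        taylorWithinEval_succ, taylor_within_zero_eval,
        hD 1 (by norm_num), hD 2 (by norm_num), hD 3 (by norm_num)]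
    have hg0 : g 0 = φ x := by simp [hg_def]
    rw [hg0]
    simp [Nat.factorial, smul_eq_mul]
    ring
  have hgh : g h = φ (x + h • w) := rfl
  rw [hgh, hT] at key
  have h6 : ((Nat.factorial 3 : ℕ) : ℝ) = 6 := by norm_num [Nat.factorial]
  rw [Real.norm_eq_abs] at key
  calc |φ (x + h • w) - (φ x + h * iteratedFDeriv ℝ 1 φ x (fun _ => w)
        + h ^ 2 / 2 * iteratedFDeriv ℝ 2 φ x (fun _ => w)
        + h ^ 3 / 6 * iteratedFDeriv ℝ 3 φ x (fun _ => w))|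
      ≤ M₄ * ‖w‖ ^ 4 * (h - 0) ^ (3 + 1) / (Nat.factorial 3 : ℕ) := key
    _ = M₄ * ‖w‖ ^ 4 * h ^ 4 / 6 := by rw [h6]; ring


/-- Second difference quotient bound. -/
lemma aux_secondDiff {d : ℕ} {φ : E d → ℝ} (hφ : ContDiff ℝ 4 φ) {M₄ : ℝ}
    (hM : ∀ y, ‖iteratedFDeriv ℝ 4 φ y‖ ≤ M₄) (x v : E d) {h : ℝ} (hh : 0 < h) :
    |(φ (x + h • v) + φ (x - h • v) - 2 * φ x) / h ^ 2
        - fderiv ℝ (fderiv ℝ φ) x v v| ≤ M₄ * ‖v‖ ^ 4 / 3 * h ^ 2 := by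
  have flip : ∀ k : ℕ, (iteratedFDeriv ℝ k φ x) (fun _ => -v)
      = (-1 : ℝ) ^ k * (iteratedFDeriv ℝ k φ x) (fun _ => v) := by
    intro k
    have h1 : (fun _ : Fin k => -v) = fun _ : Fin k => (-1 : ℝ) • v := by
      funext i; simp
    rw [h1, (iteratedFDeriv ℝ k φ x).map_smul_univ (fun _ => (-1:ℝ)) (fun _ => v)]
    simp [smul_eq_mul]
  set d1 := iteratedFDeriv ℝ 1 φ x (fun _ => v) with hd1
  set d2 := iteratedFDeriv ℝ 2 φ x (fun _ => v) with hd2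
  set d3 := iteratedFDeriv ℝ 3 φ x (fun _ => v) with hd3
  have hA := aux_taylor hφ hM x v hh
  have hB := aux_taylor hφ hM x (-v) hh
  rw [flip 1, flip 2, flip 3, norm_neg] at hB
  have hxm : x + h • (-v) = x - h • v := by
    rw [smul_neg, ← sub_eq_add_neg]
  rw [hxm] at hB
  have hB' : |φ (x - h • v) - (φ x - h * d1 + h ^ 2 / 2 * d2 - h ^ 3 / 6 * d3)|
      ≤ M₄ * ‖v‖ ^ 4 * h ^ 4 / 6 := by
    calc |φ (x - h • v) - (φ x - h * d1 + h ^ 2 / 2 * d2 - h ^ 3 / 6 * d3)|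
        = |φ (x - h • v) - (φ x + h * ((-1:ℝ)^1 * d1)
            + h ^ 2 / 2 * ((-1:ℝ)^2 * d2) + h ^ 3 / 6 * ((-1:ℝ)^3 * d3))| := by
          congr 1; ring
      _ ≤ M₄ * ‖v‖ ^ 4 * h ^ 4 / 6 := hB
  have key : |(φ (x + h • v) + φ (x - h • v) - 2 * φ x) - h ^ 2 * d2|
      ≤ M₄ * ‖v‖ ^ 4 * h ^ 4 / 3 := by
    have hsplit : (φ (x + h • v) + φ (x - h • v) - 2 * φ x) - h ^ 2 * d2
        = (φ (x + h • v) - (φ x + h * d1 + h ^ 2 / 2 * d2 + h ^ 3 / 6 * d3))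
          + (φ (x - h • v) - (φ x - h * d1 + h ^ 2 / 2 * d2 - h ^ 3 / 6 * d3)) := by
      ring
    rw [hsplit]
    calc _ ≤ |φ (x + h • v) - (φ x + h * d1 + h ^ 2 / 2 * d2 + h ^ 3 / 6 * d3)|
          + |φ (x - h • v) - (φ x - h * d1 + h ^ 2 / 2 * d2 - h ^ 3 / 6 * d3)| :=
        abs_add_le _ _
      _ ≤ M₄ * ‖v‖ ^ 4 * h ^ 4 / 6 + M₄ * ‖v‖ ^ 4 * h ^ 4 / 6 := add_le_add hA hB'
      _ = M₄ * ‖v‖ ^ 4 * h ^ 4 / 3 := by ring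
  have hd2' : d2 = fderiv ℝ (fderiv ℝ φ) x v v := by
    rw [hd2, iteratedFDeriv_two_apply]
  have hne : (h:ℝ) ^ 2 ≠ 0 := by positivity
  have hdiv : (φ (x + h • v) + φ (x - h • v) - 2 * φ x) / h ^ 2
      - fderiv ℝ (fderiv ℝ φ) x v v
      = ((φ (x + h • v) + φ (x - h • v) - 2 * φ x) - h ^ 2 * d2) / h ^ 2 := by
    rw [← hd2']; field_simp
  rw [hdiv, abs_div, abs_of_pos (pow_pos hh 2), div_le_iff₀ (pow_pos hh 2)]
  calc |(φ (x + h • v) + φ (x - h • v) - 2 * φ x) - h ^ 2 * d2|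
      ≤ M₄ * ‖v‖ ^ 4 * h ^ 4 / 3 := key
    _ = M₄ * ‖v‖ ^ 4 / 3 * h ^ 2 * h ^ 2 := by ring

/-- fderiv of directional derivative equals second fderiv. -/
lemma aux_hessian {d : ℕ} {φ : E d → ℝ} (hφ : ContDiff ℝ 4 φ) (x u w : E d) :
    fderiv ℝ (fun y => fderiv ℝ φ y w) x u = fderiv ℝ (fderiv ℝ φ) x u w := by
  have hd : DifferentiableAt ℝ (fderiv ℝ φ) x := by
    have h1 : ContDiff ℝ 1 (fderiv ℝ φ) := hφ.fderiv_right (by norm_num)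
    exact (h1.differentiable (by norm_num)).differentiableAt
  have hc := ((ContinuousLinearMap.apply ℝ ℝ w).hasFDerivAt
      (x := fderiv ℝ φ x)).comp x hd.hasFDerivAt
  have h2 : HasFDerivAt (fun y => fderiv ℝ φ y w)
      ((ContinuousLinearMap.apply ℝ ℝ w).comp (fderiv ℝ (fderiv ℝ φ) x)) x := hc
  rw [h2.fderiv]
  rfl


/-- Splitting an off-diagonal sum into ordered pairs. -/
lemma aux_pairs {d : ℕ} (f : Fin d → Fin d → ℝ) :
    ∑ i, ∑ j ∈ Finset.univ.filter (fun j => i < j), (f i j + f j i)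
      = ∑ i, ∑ j ∈ Finset.univ.erase i, f i j := by
  have h1 : ∑ i, ∑ j ∈ Finset.univ.filter (fun j => i < j), (f i j + f j i)
      = (∑ i, ∑ j ∈ Finset.univ.filter (fun j => i < j), f i j)
        + ∑ i, ∑ j ∈ Finset.univ.filter (fun j => i < j), f j i := by
    rw [← Finset.sum_add_distrib]
    exact Finset.sum_congr rfl fun i _ => by rw [← Finset.sum_add_distrib]
  have h2 : ∑ i, ∑ j ∈ Finset.univ.filter (fun j => i < j), f j i
      = ∑ i, ∑ j ∈ Finset.univ.filter (fun j => j < i), f i j := by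
    exact Finset.sum_comm' (fun i j => by
      simp only [Finset.mem_univ, true_and, Finset.mem_filter, and_true, and_comm])
  rw [h1, h2, ← Finset.sum_add_distrib]
  refine Finset.sum_congr rfl fun i _ => ?_
  rw [← Finset.sum_union ?hdisj]
  · refine Finset.sum_congr ?_ fun _ _ => rfl
    ext j
    simp only [Finset.mem_union, Finset.mem_filter, Finset.mem_univ, true_and,
      Finset.mem_erase, and_true]
    constructor
    · rintro (hl | hl)
      · exact ne_of_gt hl
      · exact ne_of_lt hl
    · intro hne
      rcases lt_or_gt_of_ne hne with hl | hl
      · exact Or.inr hl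
      · exact Or.inl hl
  · rw [Finset.disjoint_left]
    intro j hj1 hj2
    simp only [Finset.mem_filter] at hj1 hj2
    exact absurd (hj1.2.trans hj2.2) (lt_irrefl i)

/-- The algebraic identity behind consistency of the monotone discretisation. -/
lemma aux_combo {d : ℕ} (A : Matrix (Fin d) (Fin d) ℝ) (hs : ∀ i j, A j i = A i j)
    (H : Matrix (Fin d) (Fin d) ℝ) :
    (∑ i, (A i i - ∑ j ∈ Finset.univ.erase i, |A i j|) * H i i)
      + ∑ i, ∑ j ∈ Finset.univ.filter (fun j => i < j),
          (max (A i j) 0 * (H i i + H j j + (H i j + H j i))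
            + max (-A i j) 0 * (H i i + H j j - (H i j + H j i)))
      = ∑ i, ∑ j, A i j * H j i := by
  have hterm : ∀ i j, max (A i j) 0 * (H i i + H j j + (H i j + H j i))
      + max (-A i j) 0 * (H i i + H j j - (H i j + H j i))
      = |A i j| * (H i i + H j j) + A i j * (H i j + H j i) := by
    intro i j
    rcases le_total (A i j) 0 with hle | hle
    · rw [max_eq_right hle, max_eq_left (by linarith), abs_of_nonpos hle]; ring
    · rw [max_eq_left hle, max_eq_right (by linarith), abs_of_nonneg hle]; ring
  have hsum2 : ∑ i, ∑ j ∈ Finset.univ.filter (fun j => i < j),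
      (max (A i j) 0 * (H i i + H j j + (H i j + H j i))
        + max (-A i j) 0 * (H i i + H j j - (H i j + H j i)))
      = (∑ i, ∑ j ∈ Finset.univ.filter (fun j => i < j),
          (|A i j| * H i i + |A j i| * H j j))
        + ∑ i, ∑ j ∈ Finset.univ.filter (fun j => i < j),
          (A i j * H j i + A j i * H i j) := by
    rw [← Finset.sum_add_distrib]
    refine Finset.sum_congr rfl fun i _ => ?_
    rw [← Finset.sum_add_distrib]
    refine Finset.sum_congr rfl fun j _ => ?_
    rw [hterm i j, hs i j]
    ring
  rw [hsum2, aux_pairs (fun i j => |A i j| * H i i), aux_pairs (fun i j => A i j * H j i)]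
  have hdiag : ∀ i : Fin d, ∑ j, A i j * H j i
      = (∑ j ∈ Finset.univ.erase i, A i j * H j i) + A i i * H i i :=
    fun i => (Finset.sum_erase_add _ _ (Finset.mem_univ i)).symm
  have hsum1 : ∑ i, (A i i - ∑ j ∈ Finset.univ.erase i, |A i j|) * H i i
      = (∑ i, A i i * H i i)
        - ∑ i, ∑ j ∈ Finset.univ.erase i, |A i j| * H i i := by
    rw [← Finset.sum_sub_distrib]
    refine Finset.sum_congr rfl fun i _ => ?_
    rw [sub_mul, Finset.sum_mul]
  rw [hsum1]
  have : ∑ i, ∑ j, A i j * H j i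
      = (∑ i, ∑ j ∈ Finset.univ.erase i, A i j * H j i) + ∑ i, A i i * H i i := by
    rw [← Finset.sum_add_distrib]
    exact Finset.sum_congr rfl fun i _ => hdiag i
  rw [this]
  ring


/-- Consistency of `L_h^A` with `Tr(A D²φ)`, with error
`≤ C Λ M₄ h²` where `C` depends only on `d`; in particular
`L_h^A φ(x) → Tr(A D²φ(x))` as `h → 0⁺`. -/
theorem Lh_consistent {d : ℕ} (hd : 1 ≤ d) :
    ∃ C : ℝ, 0 < C ∧
      ∀ (Lam : ℝ), 0 < Lam →
      ∀ (A : Matrix (Fin d) (Fin d) ℝ), A.IsHermitian → (∀ i j, |A i j| ≤ Lam) →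
      ∀ (M₄ : ℝ), 0 ≤ M₄ →
      ∀ (φ : E d → ℝ), ContDiff ℝ 4 φ → (∀ y, ‖iteratedFDeriv ℝ 4 φ y‖ ≤ M₄) →
      ∀ (x : E d),
        (∀ (h : ℝ), 0 < h →
          |Lh d h A φ x - (A * hessianMatrix d φ x).trace| ≤ C * Lam * M₄ * h ^ 2) ∧
        Filter.Tendsto (fun h => Lh d h A φ x) (nhdsWithin 0 (Set.Ioi 0))
          (nhds ((A * hessianMatrix d φ x).trace)) := by
  have hd1 : (1:ℝ) ≤ (d:ℝ) := by exact_mod_cast hd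
  have hdpos : (0:ℝ) < (d:ℝ) := by linarith
  refine ⟨32 * (d:ℝ) ^ 3, by positivity, ?_⟩
  intro Lam hLam A hA hALam M₄ hM4 φ hφ hM x
  have hsymm : ∀ i j, A j i = A i j := by
    intro i j
    conv_lhs => rw [← hA]
    simp [Matrix.conjTranspose_apply]
  set H := hessianMatrix d φ x with hH_def
  have hH : ∀ i j, H i j = fderiv ℝ (fderiv ℝ φ) x (e d i) (e d j) := by
    intro i j
    rw [hH_def]
    exact aux_hessian hφ x (e d i) (e d j)
  have htr : (A * H).trace = ∑ i, ∑ j, A i j * H j i := by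
    simp [Matrix.trace, Matrix.diag, Matrix.mul_apply]
  have hcombo := aux_combo A hsymm H
  have hBp : ∀ i j : Fin d,
      fderiv ℝ (fderiv ℝ φ) x (e d i + e d j) (e d i + e d j)
        = H i i + H j j + (H i j + H j i) := by
    intro i j
    rw [hH i i, hH i j, hH j i, hH j j]
    simp only [map_add, ContinuousLinearMap.add_apply]
    ring
  have hBm : ∀ i j : Fin d,
      fderiv ℝ (fderiv ℝ φ) x (e d i - e d j) (e d i - e d j)
        = H i i + H j j - (H i j + H j i) := by
    intro i j
    rw [hH i i, hH i j, hH j i, hH j j]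
    simp only [map_sub, ContinuousLinearMap.sub_apply]
    ring
  have hnorme : ∀ i, ‖e d i‖ = 1 := by
    intro i
    simp [e, EuclideanSpace.norm_single]
  have hbound : ∀ (h : ℝ), 0 < h →
      |Lh d h A φ x - (A * H).trace| ≤ 32 * (d:ℝ) ^ 3 * Lam * M₄ * h ^ 2 := by
    intro h hh
    set err : E d → ℝ := fun v =>
      (φ (x + h • v) + φ (x - h • v) - 2 * φ x) / h ^ 2
        - fderiv ℝ (fderiv ℝ φ) x v v with herr_def
    set b : ℝ := 16 * M₄ / 3 * h ^ 2 with hb_def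
    have hbpos : 0 ≤ b := by rw [hb_def]; positivity
    have herr : ∀ v : E d, ‖v‖ ≤ 2 → |err v| ≤ b := by
      intro v hv
      refine (aux_secondDiff hφ hM x v hh).trans ?_
      have hv4 : ‖v‖ ^ 4 ≤ 16 := by
        have := pow_le_pow_left₀ (norm_nonneg v) hv 4
        norm_num at this
        linarith
      have hhint : 0 ≤ (16 - ‖v‖ ^ 4) * M₄ * h ^ 2 :=
        mul_nonneg (mul_nonneg (by linarith) hM4) (by positivity)
      rw [hb_def]
      nlinarith [hhint]
    have herr1 : ∀ i, |err (e d i)| ≤ b := by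
      intro i
      refine herr _ ?_
      rw [hnorme i]; norm_num
    have herrp : ∀ i j, |err (e d i + e d j)| ≤ b := by
      intro i j
      refine herr _ ?_
      calc ‖e d i + e d j‖ ≤ ‖e d i‖ + ‖e d j‖ := norm_add_le _ _
        _ ≤ 2 := by rw [hnorme i, hnorme j]; norm_num
    have herrm : ∀ i j, |err (e d i - e d j)| ≤ b := by
      intro i j
      refine herr _ ?_
      calc ‖e d i - e d j‖ ≤ ‖e d i‖ + ‖e d j‖ := norm_sub_le _ _
        _ ≤ 2 := by rw [hnorme i, hnorme j]; norm_num
    have hkey : Lh d h A φ x - (A * H).trace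
        = (∑ i, (A i i - ∑ j ∈ Finset.univ.erase i, |A i j|) * err (e d i))
          + ∑ i, ∑ j ∈ Finset.univ.filter (fun j => i < j),
              (max (A i j) 0 * err (e d i + e d j)
                + max (-A i j) 0 * err (e d i - e d j)) := by
      rw [htr, ← hcombo]
      simp only [Lh]
      have e1 : ∑ i, (A i i - ∑ j ∈ Finset.univ.erase i, |A i j|) * err (e d i)
          = (∑ i, (A i i - ∑ j ∈ Finset.univ.erase i, |A i j|)
              * ((φ (x + h • e d i) + φ (x - h • e d i) - 2 * φ x) / h ^ 2))
            - ∑ i, (A i i - ∑ j ∈ Finset.univ.erase i, |A i j|) * H i i := by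
        rw [← Finset.sum_sub_distrib]
        refine Finset.sum_congr rfl fun i _ => ?_
        rw [herr_def]
        simp only
        rw [hH i i]
        ring
      have e2 : ∑ i, ∑ j ∈ Finset.univ.filter (fun j => i < j),
            (max (A i j) 0 * err (e d i + e d j)
              + max (-A i j) 0 * err (e d i - e d j))
          = (∑ i, ∑ j ∈ Finset.univ.filter (fun j => i < j),
              (max (A i j) 0 *
                  ((φ (x + h • (e d i + e d j)) + φ (x - h • (e d i + e d j)) - 2 * φ x) / h ^ 2)
                + max (-A i j) 0 *
                  ((φ (x + h • (e d i - e d j)) + φ (x - h • (e d i - e d j)) - 2 * φ x) / h ^ 2)))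
            - ∑ i, ∑ j ∈ Finset.univ.filter (fun j => i < j),
                (max (A i j) 0 * (H i i + H j j + (H i j + H j i))
                  + max (-A i j) 0 * (H i i + H j j - (H i j + H j i))) := by
        rw [← Finset.sum_sub_distrib]
        refine Finset.sum_congr rfl fun i _ => ?_
        rw [← Finset.sum_sub_distrib]
        refine Finset.sum_congr rfl fun j _ => ?_
        rw [herr_def]
        simp only
        rw [hBp i j, hBm i j]
        ring
      rw [e1, e2]
      ring
    have hb1 : ∀ i : Fin d, abs (A i i - ∑ j ∈ Finset.univ.erase i, |A i j|)
        ≤ ((d:ℝ) + 1) * Lam := by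
      intro i
      have h1 : |A i i| ≤ Lam := hALam i i
      have h3 : 0 ≤ ∑ j ∈ Finset.univ.erase i, |A i j| :=
        Finset.sum_nonneg fun j _ => abs_nonneg _
      have h2 : ∑ j ∈ Finset.univ.erase i, |A i j| ≤ (d:ℝ) * Lam := by
        calc ∑ j ∈ Finset.univ.erase i, |A i j|
            ≤ ∑ _j ∈ Finset.univ.erase i, Lam :=
              Finset.sum_le_sum fun j _ => hALam i j
          _ = ((Finset.univ.erase i).card : ℝ) * Lam := by
              rw [Finset.sum_const, nsmul_eq_mul]
          _ ≤ (d:ℝ) * Lam := by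
              refine mul_le_mul_of_nonneg_right ?_ hLam.le
              have h4 : (Finset.univ.erase i).card ≤ d := by
                calc (Finset.univ.erase i).card
                    ≤ (Finset.univ : Finset (Fin d)).card :=
                      Finset.card_le_card (Finset.subset_univ _)
                  _ = d := by rw [Finset.card_univ, Fintype.card_fin]
              exact_mod_cast h4
      have h5 := abs_add_le (A i i) (-(∑ j ∈ Finset.univ.erase i, |A i j|))
      rw [← sub_eq_add_neg, abs_neg, abs_of_nonneg h3] at h5
      linarith
    have hmaxb : ∀ a : ℝ, |a| ≤ Lam → |max a 0| ≤ Lam := by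
      intro a ha
      rw [abs_of_nonneg (le_max_right a 0)]
      exact max_le ((le_abs_self a).trans ha) hLam.le
    have S1 : abs (∑ i, (A i i - ∑ j ∈ Finset.univ.erase i, |A i j|) * err (e d i))
        ≤ (d:ℝ) * (((d:ℝ) + 1) * Lam * b) := by
      calc abs (∑ i, (A i i - ∑ j ∈ Finset.univ.erase i, |A i j|) * err (e d i))
          ≤ ∑ i, abs ((A i i - ∑ j ∈ Finset.univ.erase i, |A i j|) * err (e d i)) :=
            Finset.abs_sum_le_sum_abs _ _
        _ ≤ ∑ _i : Fin d, ((d:ℝ) + 1) * Lam * b := by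
            refine Finset.sum_le_sum fun i _ => ?_
            rw [abs_mul]
            exact mul_le_mul (hb1 i) (herr1 i) (abs_nonneg _) (by positivity)
        _ = (d:ℝ) * (((d:ℝ) + 1) * Lam * b) := by
            rw [Finset.sum_const, Finset.card_univ, Fintype.card_fin, nsmul_eq_mul]
    have S2 : |∑ i, ∑ j ∈ Finset.univ.filter (fun j => i < j),
          (max (A i j) 0 * err (e d i + e d j) + max (-A i j) 0 * err (e d i - e d j))|
        ≤ (d:ℝ) * ((d:ℝ) * (2 * Lam * b)) := by
      calc |∑ i, ∑ j ∈ Finset.univ.filter (fun j => i < j),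
            (max (A i j) 0 * err (e d i + e d j) + max (-A i j) 0 * err (e d i - e d j))|
          ≤ ∑ i, |∑ j ∈ Finset.univ.filter (fun j => i < j),
              (max (A i j) 0 * err (e d i + e d j) + max (-A i j) 0 * err (e d i - e d j))| :=
            Finset.abs_sum_le_sum_abs _ _
        _ ≤ ∑ _i : Fin d, (d:ℝ) * (2 * Lam * b) := by
            refine Finset.sum_le_sum fun i _ => ?_
            calc |∑ j ∈ Finset.univ.filter (fun j => i < j),
                  (max (A i j) 0 * err (e d i + e d j)
                    + max (-A i j) 0 * err (e d i - e d j))|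
                ≤ ∑ j ∈ Finset.univ.filter (fun j => i < j),
                  |max (A i j) 0 * err (e d i + e d j)
                    + max (-A i j) 0 * err (e d i - e d j)| :=
                  Finset.abs_sum_le_sum_abs _ _
              _ ≤ ∑ _j ∈ Finset.univ.filter (fun j => i < j), (2 * Lam * b) := by
                  refine Finset.sum_le_sum fun j _ => ?_
                  calc |max (A i j) 0 * err (e d i + e d j)
                        + max (-A i j) 0 * err (e d i - e d j)|
                      ≤ |max (A i j) 0 * err (e d i + e d j)|
                        + |max (-A i j) 0 * err (e d i - e d j)| := abs_add_le _ _
                    _ ≤ Lam * b + Lam * b := by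
                        rw [abs_mul, abs_mul]
                        exact add_le_add
                          (mul_le_mul (hmaxb _ (hALam i j)) (herrp i j) (abs_nonneg _) hLam.le)
                          (mul_le_mul (hmaxb _ (by rw [abs_neg]; exact hALam i j)) (herrm i j)
                            (abs_nonneg _) hLam.le)
                    _ = 2 * Lam * b := by ring
              _ ≤ (d:ℝ) * (2 * Lam * b) := by
                  rw [Finset.sum_const, nsmul_eq_mul]
                  refine mul_le_mul_of_nonneg_right ?_ (by positivity)
                  have h6 := Finset.card_filter_le (Finset.univ : Finset (Fin d))
                    (fun j => i < j)
                  rw [Finset.card_univ, Fintype.card_fin] at h6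
                  exact_mod_cast h6
        _ = (d:ℝ) * ((d:ℝ) * (2 * Lam * b)) := by
            rw [Finset.sum_const, Finset.card_univ, Fintype.card_fin, nsmul_eq_mul]
    rw [hkey]
    calc abs ((∑ i, (A i i - ∑ j ∈ Finset.univ.erase i, |A i j|) * err (e d i))
          + ∑ i, ∑ j ∈ Finset.univ.filter (fun j => i < j),
              (max (A i j) 0 * err (e d i + e d j) + max (-A i j) 0 * err (e d i - e d j)))
        ≤ (d:ℝ) * (((d:ℝ) + 1) * Lam * b) + (d:ℝ) * ((d:ℝ) * (2 * Lam * b)) :=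
          (abs_add_le _ _).trans (add_le_add S1 S2)
      _ = (((d:ℝ) * ((d:ℝ) + 1) + 2 * (d:ℝ) ^ 2) * (16 / 3)) * (Lam * (M₄ * h ^ 2)) := by
          rw [hb_def]; ring
      _ ≤ (32 * (d:ℝ) ^ 3) * (Lam * (M₄ * h ^ 2)) := by
          refine mul_le_mul_of_nonneg_right ?_ (by positivity)
          nlinarith [hd1, sq_nonneg ((d:ℝ) - 1)]
      _ = 32 * (d:ℝ) ^ 3 * Lam * M₄ * h ^ 2 := by ring
  refine ⟨hbound, ?_⟩
  have h0 : Filter.Tendsto (fun h : ℝ => 32 * (d:ℝ) ^ 3 * Lam * M₄ * h ^ 2)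
      (nhdsWithin 0 (Set.Ioi 0)) (nhds 0) := by
    have hc : Continuous fun h : ℝ => 32 * (d:ℝ) ^ 3 * Lam * M₄ * h ^ 2 :=
      continuous_const.mul (continuous_pow 2)
    have h9 := (hc.tendsto 0).mono_left
      (nhdsWithin_le_nhds (s := Set.Ioi (0:ℝ)))
    simpa using h9
  have h1 : Filter.Tendsto (fun h => Lh d h A φ x - (A * H).trace)
      (nhdsWithin 0 (Set.Ioi 0)) (nhds 0) := by
    apply squeeze_zero_norm' ?_ h0
    filter_upwards [self_mem_nhdsWithin] with h hh
    simpa [Real.norm_eq_abs] using hbound h hh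
  exact tendsto_sub_nhds_zero_iff.mp h1

end Paper
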